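/- arXiv:2006.06876 — 2 statements merged into one kernel-verified Lean document; each statement's English description precedes it below -/
import Mathlib

section
/- Let Γ be a finite group. For every Γ-lattice M there exists a short exact sequence of Γ-lattices 0 → P → F → M → 0 in which P is a permutation Γ-lattice and F is a flasque Γ-lattice (a flasque resolution of M of the second type exists). -/
/-! Basic definitions for Γ-lattices over a finite group Γ. -/

/-- A `Γ`-lattice: a finitely generated free `ℤ`-module equipped with a
`ℤ`-linear action of `Γ`, i.e. a `ℤ[Γ]`-module which is finitely generated
and free as a `ℤ`-module. -/
structure GammaLattice (Γ : Type) [Group Γ] where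
  carrier : Type
  [isAddCommGroup : AddCommGroup carrier]
  [isModule : Module ℤ carrier]
  ρ : Representation ℤ Γ carrier
  free : Module.Free ℤ carrier
  finite : Module.Finite ℤ carrier

attribute [instance] GammaLattice.isAddCommGroup GammaLattice.isModule

variable {Γ : Type} [Group Γ]

/-- A `ℤ`-linear map between `Γ`-representations is equivariant (i.e. is a
`ℤ[Γ]`-module homomorphism) if it commutes with the `Γ`-actions. -/
def IsEquivariantMap {M N : Type} [AddCommGroup M] [Module ℤ M]
    [AddCommGroup N] [Module ℤ N]
    (ρM : Representation ℤ Γ M) (ρN : Representation ℤ Γ N)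
    (f : M →ₗ[ℤ] N) : Prop :=
  ∀ (γ : Γ) (m : M), f (ρM γ m) = ρN γ (f m)

/-- A short exact sequence `0 → A → B → C → 0` of `ℤ[Γ]`-modules. -/
def IsShortExactSeq {A B C : Type} [AddCommGroup A] [Module ℤ A]
    [AddCommGroup B] [Module ℤ B] [AddCommGroup C] [Module ℤ C]
    (ρA : Representation ℤ Γ A) (ρB : Representation ℤ Γ B)
    (ρC : Representation ℤ Γ C)
    (f : A →ₗ[ℤ] B) (g : B →ₗ[ℤ] C) : Prop :=
  IsEquivariantMap ρA ρB f ∧ IsEquivariantMap ρB ρC g ∧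
    Function.Injective f ∧ Function.Surjective g ∧
    LinearMap.range f = LinearMap.ker g

/-- A `Γ`-lattice is a permutation lattice if it has a `ℤ`-basis permuted
by `Γ`. -/
def GammaLattice.IsPermutation (L : GammaLattice Γ) : Prop :=
  ∃ (ι : Type) (b : Module.Basis ι ℤ L.carrier),
    ∀ (γ : Γ) (i : ι), ∃ j : ι, L.ρ γ (b i) = b j

/-- A `Γ`-lattice is invertible if it is a direct summand of a permutation
`Γ`-lattice. -/
def GammaLattice.IsInvertible (L : GammaLattice Γ) : Prop :=
  ∃ N : GammaLattice Γ, N.IsPermutation ∧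
    ∃ (i : L.carrier →ₗ[ℤ] N.carrier) (p : N.carrier →ₗ[ℤ] L.carrier),
      IsEquivariantMap L.ρ N.ρ i ∧ IsEquivariantMap N.ρ L.ρ p ∧
        p.comp i = LinearMap.id

/-- A `Γ`-lattice is coflasque if `H¹(Γ', M) = 0` for every subgroup
`Γ' ≤ Γ`. -/
def GammaLattice.IsCoflasque (L : GammaLattice Γ) : Prop :=
  ∀ Γ' : Subgroup Γ,
    Subsingleton (groupCohomology.H1 (Rep.of (L.ρ.comp Γ'.subtype)))

/-- The dual lattice `M^∨ = Hom_ℤ(M, ℤ)` with the action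
`(γ · f)(m) = f(γ⁻¹ · m)`. -/
noncomputable def GammaLattice.dual (L : GammaLattice Γ) : GammaLattice Γ where
  carrier := Module.Dual ℤ L.carrier
  ρ := L.ρ.dual
  free := by have := L.free; have := L.finite; infer_instance
  finite := by have := L.free; have := L.finite; infer_instance

/-- A `Γ`-lattice is flasque if its dual is coflasque. -/
noncomputable def GammaLattice.IsFlasque (L : GammaLattice Γ) : Prop :=
  L.dual.IsCoflasque

/-- `Ext¹_Γ(A, B) = 0`, formulated as: every short exact sequence of
`ℤ[Γ]`-modules `0 → B → E → A → 0` splits (admits an equivariant section). -/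
def Ext1Vanishes {A B : Type} [AddCommGroup A] [Module ℤ A]
    [AddCommGroup B] [Module ℤ B]
    (ρA : Representation ℤ Γ A) (ρB : Representation ℤ Γ B) : Prop :=
  ∀ (E : Type) [AddCommGroup E] [Module ℤ E],
    ∀ (ρE : Representation ℤ Γ E) (ι : B →ₗ[ℤ] E) (π : E →ₗ[ℤ] A),
      IsShortExactSeq ρB ρE ρA ι π →
      ∃ s : A →ₗ[ℤ] E, IsEquivariantMap ρA ρE s ∧ π.comp s = LinearMap.id

/-- The direct sum (product) of two representations. -/
def prodRep {M N : Type} [AddCommGroup M] [Module ℤ M]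
    [AddCommGroup N] [Module ℤ N]
    (ρM : Representation ℤ Γ M) (ρN : Representation ℤ Γ N) :
    Representation ℤ Γ (M × N) where
  toFun γ := (ρM γ).prodMap (ρN γ)
  map_one' := by ext x <;> simp
  map_mul' g h := by ext x <;> simp [Module.End.mul_apply]


section Aux

variable {G : Type} [Group G]

/-- `H¹` triviality at the level of cocycles. -/
def RawH1TrivialK (k : Type) [CommRing k] {V : Type} [AddCommGroup V] [Module k V]
    (ρ : Representation k G V) : Prop :=
  ∀ c : G → V, (∀ g h, c (g * h) = ρ g (c h) + c g) → ∃ x, ∀ g, c g = ρ g x - x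

/-- `H¹` triviality at the level of cocycles, over `ℤ`. -/
abbrev RawH1Trivial {V : Type} [AddCommGroup V] [Module ℤ V]
    (ρ : Representation ℤ G V) : Prop := RawH1TrivialK ℤ ρ

theorem subsingleton_h1_iff_k {k : Type} [CommRing k] {V : Type} [AddCommGroup V] [Module k V]
    (ρ : Representation k G V) :
    Subsingleton (groupCohomology.H1 (Rep.of ρ)) ↔ RawH1TrivialK k ρ := by
  constructor
  · intro h f hf
    have hmem : f ∈ groupCohomology.cocycles₁ (Rep.of ρ) :=
      (groupCohomology.mem_cocycles₁_iff (A := Rep.of ρ) f).2 hf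
    have h3 := (groupCohomology.H1π_eq_zero_iff (A := Rep.of ρ) ⟨f, hmem⟩).1
      (Subsingleton.elim _ _)
    obtain ⟨x, hx⟩ := h3
    exact ⟨x, fun g => (congrFun hx g).symm⟩
  · intro h
    have hall : ∀ c : groupCohomology.cocycles₁ (Rep.of ρ),
        ⇑c ∈ groupCohomology.coboundaries₁ (Rep.of ρ) := by
      intro c
      obtain ⟨x, hx⟩ := h c ((groupCohomology.mem_cocycles₁_iff _).1 c.2)
      exact ⟨x, funext fun g => (hx g).symm⟩
    constructor
    intro a b
    refine groupCohomology.H1_induction_on a (fun x => ?_)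
    refine groupCohomology.H1_induction_on b (fun y => ?_)
    rw [groupCohomology.H1π_eq_iff]
    exact Submodule.sub_mem _ (hall x) (hall y)

theorem subsingleton_h1_iff {V : Type} [AddCommGroup V] [Module ℤ V]
    (ρ : Representation ℤ G V) :
    Subsingleton (groupCohomology.H1 (Rep.of ρ)) ↔ RawH1Trivial ρ :=
  subsingleton_h1_iff_k ρ

theorem RawH1Trivial.congr {V W : Type} [AddCommGroup V] [Module ℤ V]
    [AddCommGroup W] [Module ℤ W] {ρV : Representation ℤ G V} {ρW : Representation ℤ G W}
    (e : V ≃ₗ[ℤ] W) (he : ∀ g v, e (ρV g v) = ρW g (e v))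
    (h : RawH1Trivial ρV) : RawH1Trivial ρW := by
  intro c hc
  have he' : ∀ g w, e.symm (ρW g w) = ρV g (e.symm w) := by
    intro g w
    apply e.injective
    rw [e.apply_symm_apply, he, e.apply_symm_apply]
  obtain ⟨x, hx⟩ := h (fun g => e.symm (c g)) (by
    intro g h'
    rw [hc, map_add, he'])
  refine ⟨e x, fun g => ?_⟩
  have := congrArg e (hx g)
  rwa [e.apply_symm_apply, map_sub, he] at this

/-- The permutation representation on `α →₀ ℤ` attached to `φ : G →* Equiv.Perm α`. -/
noncomputable def permRep {α : Type} (φ : G →* Equiv.Perm α) : Representation ℤ G (α →₀ ℤ) where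
  toFun g := (Finsupp.domLCongr (R := ℤ) (M := ℤ) (φ g : α ≃ α)).toLinearMap
  map_one' := by
    ext f a
    simp [Finsupp.domLCongr_apply]
  map_mul' g h := by
    ext f a
    simp [Finsupp.domLCongr_apply, Module.End.mul_apply]

theorem permRep_apply {α : Type} (φ : G →* Equiv.Perm α) (g : G) (f : α →₀ ℤ) (a : α) :
    permRep φ g f a = f ((φ g)⁻¹ a) := by
  simp [permRep, Finsupp.domLCongr_apply]

theorem permRep_single {α : Type} (φ : G →* Equiv.Perm α) (g : G) (a : α) (n : ℤ) :
    permRep φ g (Finsupp.single a n) = Finsupp.single (φ g a) n := by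
  classical
  ext b
  rw [permRep_apply]
  simp only [Finsupp.single_apply]
  by_cases h : φ g a = b
  · rw [if_pos h, if_pos (by rw [← h]; simp)]
  · rw [if_neg h, if_neg (fun hh => h (by rw [hh]; simp))]

end Aux


lemma perm_cocycle_is_coboundary {G α : Type} [Group G] [Finite G] (φ : G →* Equiv.Perm α)
    (ρ : Representation ℤ G (α →₀ ℤ))
    (hρ : ∀ (g : G) (f : α →₀ ℤ) (a : α), (ρ g f) a = f ((φ g)⁻¹ a))
    (c : G → (α →₀ ℤ)) (hc : ∀ g h, c (g * h) = ρ g (c h) + c g) :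
    ∃ p, ∀ g, c g = ρ g p - p := by
  classical
  have hone : c 1 = 0 := by
    have h := hc 1 1
    simp only [mul_one, map_one, Module.End.one_apply] at h
    have : c 1 + 0 = c 1 + c 1 := by rw [add_zero]; conv_lhs => rw [h]
    exact (add_left_cancel this).symm
  -- stabilizer values vanish
  have hpow : ∀ (δ : G) (z : α), φ δ z = z → ∀ n : ℕ, c (δ ^ n) z = n * (c δ z) := by
    intro δ z hz n
    induction n with
    | zero => simp [hone]
    | succ n ih =>
      have : c (δ ^ (n+1)) = ρ δ (c (δ ^ n)) + c δ := by rw [pow_succ']; exact hc δ (δ ^ n)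
      have hz' : (φ δ)⁻¹ z = z := by
        have := congrArg (fun y => (φ δ)⁻¹ y) hz; simpa using this.symm
      calc c (δ ^ (n+1)) z = (ρ δ (c (δ ^ n))) z + c δ z := by rw [this]; simp
        _ = c (δ ^ n) z + c δ z := by rw [hρ, hz']
        _ = (n+1 : ℕ) * (c δ z) := by rw [ih]; push_cast; ring
  have hstab : ∀ (δ : G) (z : α), φ δ z = z → c δ z = 0 := by
    intro δ z hz
    have hn : δ ^ (orderOf δ) = 1 := pow_orderOf_eq_one δ
    have hpos : 0 < orderOf δ := by
      have : Fintype G := Fintype.ofFinite G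
      exact orderOf_pos δ
    have := hpow δ z hz (orderOf δ)
    rw [hn] at this
    have h0 : (0:ℤ) = (orderOf δ : ℤ) * c δ z := by simpa [hone] using this
    have := h0.symm
    rcases mul_eq_zero.1 this with h | h
    · exact absurd h (by exact_mod_cast hpos.ne')
    · exact h
  -- well-definedness
  have hwd : ∀ (z x : α) (σ τ : G), φ σ z = x → φ τ z = x → c σ x = c τ x := by
    intro z x σ τ hσ hτ
    have hδ : φ (τ⁻¹ * σ) z = z := by
      rw [map_mul]; simp only [Equiv.Perm.coe_mul, Function.comp_apply, hσ]
      rw [map_inv]; have := congrArg (fun y => (φ τ)⁻¹ y) hτ; simpa using this.symm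
    have hσeq : σ = τ * (τ⁻¹ * σ) := by group
    have := hc τ (τ⁻¹ * σ)
    rw [← hσeq] at this
    have hx : (φ τ)⁻¹ x = z := by have := congrArg (fun y => (φ τ)⁻¹ y) hτ; simpa using this.symm
    calc c σ x = (ρ τ (c (τ⁻¹ * σ))) x + c τ x := by rw [this]; simp
      _ = c (τ⁻¹ * σ) z + c τ x := by rw [hρ, hx]
      _ = c τ x := by rw [hstab _ _ hδ]; ring
  -- orbit setup
  let s : Setoid α := ⟨fun a b => ∃ g, φ g a = b,
    ⟨fun a => ⟨1, by simp⟩, fun ⟨g, hg⟩ => ⟨g⁻¹, by rw [← hg]; simp⟩,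
     fun ⟨g, hg⟩ ⟨h, hh⟩ => ⟨h * g, by rw [map_mul]; simp [hg, hh]⟩⟩⟩
  let r : α → α := fun a => (Quotient.mk s a).out
  have hr : ∀ a, ∃ g, φ g (r a) = a := fun a => Quotient.exact (Quotient.out_eq (Quotient.mk s a))
  let σf : α → G := fun a => (hr a).choose
  have hσf : ∀ a, φ (σf a) (r a) = a := fun a => (hr a).choose_spec
  have hrg : ∀ (g : G) (a : α), r ((φ g)⁻¹ a) = r a := by
    intro g a
    have : Quotient.mk s ((φ g)⁻¹ a) = Quotient.mk s a := Quotient.sound ⟨g, by simp⟩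
    simp only [r, this]
  -- candidate p
  have : Fintype G := Fintype.ofFinite G
  let fp : α → ℤ := fun a => -(c (σf a) a)
  let p : α →₀ ℤ := Finsupp.onFinset (Finset.univ.biUnion (fun g : G => (c g).support)) fp
    (fun a ha => by
      have : c (σf a) a ≠ 0 := fun h => ha (by simp [fp, h])
      exact Finset.mem_biUnion.2 ⟨σf a, Finset.mem_univ _, Finsupp.mem_support_iff.2 this⟩)
  have hp : ∀ a, p a = -(c (σf a) a) := fun a => rfl
  refine ⟨p, fun g => ?_⟩
  ext a
  rw [Finsupp.sub_apply, hρ, hp, hp]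
  set a' := (φ g)⁻¹ a with ha'
  have hz : r a' = r a := hrg g a
  have hkey : c (σf a') a' = c (g⁻¹ * σf a) a' := by
    refine hwd (r a) a' (σf a') (g⁻¹ * σf a) (by rw [← hz]; exact hσf a') ?_
    rw [map_mul]
    simp only [Equiv.Perm.coe_mul, Function.comp_apply, hσf a, map_inv, ha']
  have hginv : c g⁻¹ = -(ρ g⁻¹ (c g)) := by
    have := hc g⁻¹ g
    rw [inv_mul_cancel, hone] at this
    exact eq_neg_of_add_eq_zero_right this.symm
  have hexp : c (g⁻¹ * σf a) = ρ g⁻¹ (c (σf a)) + c g⁻¹ := hc g⁻¹ (σf a)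
  have heval : ∀ f : α →₀ ℤ, (ρ g⁻¹ f) a' = f a := by
    intro f; rw [hρ]; congr 1; rw [ha']; simp
  have : c (σf a') a' = c (σf a) a - c g a := by
    rw [hkey, hexp]
    rw [Finsupp.add_apply, heval, hginv, Finsupp.neg_apply, heval]
    ring
  rw [this]; ring

-- CONSTRUCTION
section Construction

variable {Γ : Type} [Group Γ] [Finite Γ]

instance (L : GammaLattice Γ) : Module.Free ℤ L.carrier := L.free
instance (L : GammaLattice Γ) : Module.Finite ℤ L.carrier := L.finite

instance : Finite (Subgroup Γ) :=
  Finite.of_injective (fun H : Subgroup Γ => (H : Set Γ)) fun _ _ h => SetLike.coe_injective h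

lemma rawH1Trivial_of_perm {G α : Type} [Group G] [Finite G] (φ : G →* Equiv.Perm α)
    (ρ : Representation ℤ G (α →₀ ℤ))
    (hρ : ∀ (g : G) (f : α →₀ ℤ) (a : α), (ρ g f) a = f ((φ g)⁻¹ a)) :
    RawH1Trivial ρ :=
  fun c hc => perm_cocycle_is_coboundary φ ρ hρ c hc

variable (N : GammaLattice Γ)

/-- Index of a chosen basis of `N`. -/
noncomputable abbrev cJ := Module.Free.ChooseBasisIndex ℤ N.carrier

noncomputable def bN : Module.Basis (cJ N) ℤ N.carrier := Module.Free.chooseBasis ℤ N.carrier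

/-- Index set for the permutation module in which `N` embeds. -/
abbrev idx1 := Γ × cJ N

/-- `Γ` permutes `idx1` through the first factor. -/
def phi1 : Γ →* Equiv.Perm (idx1 N) where
  toFun g := Equiv.prodCongr (Equiv.mulLeft g) (Equiv.refl _)
  map_one' := Equiv.ext fun x => by simp
  map_mul' g h := Equiv.ext fun x => by cases x; simp [mul_assoc]

noncomputable def rho1 : Representation ℤ Γ (idx1 N →₀ ℤ) := permRep (phi1 N)

/-- The equivariant embedding of `N` into the permutation module. -/
noncomputable def psi : N.carrier →ₗ[ℤ] (idx1 N →₀ ℤ) :=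
  (Finsupp.linearEquivFunOnFinite ℤ ℤ (idx1 N)).symm.toLinearMap ∘ₗ
    LinearMap.pi fun p : idx1 N => (bN N).coord p.2 ∘ₗ (N.ρ p.1⁻¹)

lemma psi_apply (x : N.carrier) (p : idx1 N) :
    psi N x p = (bN N).coord p.2 (N.ρ p.1⁻¹ x) := by
  simp [psi, Finsupp.linearEquivFunOnFinite]

lemma psi_equivariant (g : Γ) (x : N.carrier) : psi N (N.ρ g x) = rho1 N g (psi N x) := by
  ext p
  rw [psi_apply, rho1, permRep_apply, psi_apply]
  have h1 : ((phi1 N g)⁻¹ p) = (g⁻¹ * p.1, p.2) := rfl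
  rw [h1]
  simp only []
  congr 1
  rw [← Module.End.mul_apply, ← map_mul]
  congr 2
  group

lemma psi_injective : Function.Injective (psi N) := by
  intro x y h
  apply (bN N).repr.injective
  ext j
  have := congrArg (fun f => f ((1 : Γ), j)) h
  simp only [psi_apply] at this
  simpa [Module.Basis.coord_apply] using this

/-- The quotient module `X`. -/
abbrev XQ := (idx1 N →₀ ℤ) ⧸ LinearMap.range (psi N)

lemma range_psi_stable (g : Γ) :
    LinearMap.range (psi N) ≤ (LinearMap.range (psi N)).comap (rho1 N g) := by
  rintro _ ⟨x, rfl⟩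
  exact ⟨N.ρ g x, (psi_equivariant N g x)⟩

/-- The induced representation on the quotient `X`. -/
noncomputable def rhoX : Representation ℤ Γ (XQ N) where
  toFun g := Submodule.mapQ _ _ (rho1 N g) (range_psi_stable N g)
  map_one' := by
    apply Submodule.linearMap_qext
    ext x
    simp
  map_mul' g h := by
    apply Submodule.linearMap_qext
    ext x
    simp [Module.End.mul_apply]

lemma rhoX_mk (g : Γ) (x : idx1 N →₀ ℤ) :
    rhoX N g (Submodule.Quotient.mk x) = Submodule.Quotient.mk (rho1 N g x) := by
  simp [rhoX, Submodule.mapQ_apply]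

instance : Module.Finite ℤ (idx1 N →₀ ℤ) :=
  Module.Finite.equiv (Finsupp.linearEquivFunOnFinite ℤ ℤ (idx1 N)).symm

instance : Module.Finite ℤ (XQ N) := Module.Finite.quotient ℤ _

/-- The fixed submodule of `X` under a subgroup. -/
noncomputable def fixX (Γ' : Subgroup Γ) : Submodule ℤ (XQ N) :=
  Representation.invariants ((rhoX N).comp Γ'.subtype)

lemma fixX_fg (Γ' : Subgroup Γ) : (fixX N Γ').FG :=
  IsNoetherian.noetherian _

/-- A chosen finite generating set of the fixed submodule. -/
noncomputable def gensX (Γ' : Subgroup Γ) : Finset (XQ N) := (fixX_fg N Γ').choose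

lemma span_gensX (Γ' : Subgroup Γ) : Submodule.span ℤ (gensX N Γ' : Set (XQ N)) = fixX N Γ' :=
  (fixX_fg N Γ').choose_spec

lemma gensX_fixed (Γ' : Subgroup Γ) (s : XQ N) (hs : s ∈ gensX N Γ') (γ : Γ) (hγ : γ ∈ Γ') :
    rhoX N γ s = s := by
  have : s ∈ fixX N Γ' := span_gensX N Γ' ▸ Submodule.subset_span hs
  exact this ⟨γ, hγ⟩

/-- Index set for the big permutation module covering the fixed points of `X`. -/
abbrev idx2 := Σ Γ' : Subgroup Γ, {s // s ∈ gensX N Γ'} × (Γ ⧸ Γ')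

/-- `Γ` permutes `idx2` through the coset factor. -/
def phi2 : Γ →* Equiv.Perm (idx2 N) where
  toFun g := Equiv.sigmaCongrRight fun Γ' =>
    Equiv.prodCongr (Equiv.refl _) (MulAction.toPermHom Γ (Γ ⧸ Γ') g)
  map_one' := Equiv.ext fun x => by
    rcases x with ⟨A, s, c⟩
    simp
  map_mul' g h := Equiv.ext fun x => by
    rcases x with ⟨A, s, c⟩
    simp [mul_smul]

lemma phi2_apply (g : Γ) (A : Subgroup Γ) (s : {s // s ∈ gensX N A}) (c : Γ ⧸ A) :
    phi2 N g ⟨A, s, c⟩ = ⟨A, s, g • c⟩ := rfl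

noncomputable def rho2 : Representation ℤ Γ (idx2 N →₀ ℤ) := permRep (phi2 N)

/-- The map on indices underlying `q : P₂ → X`. -/
noncomputable def qval : idx2 N → XQ N := fun p =>
  Quotient.liftOn' p.2.2 (fun γ => rhoX N γ p.2.1.1) (by
    intro γ γ' h
    rw [QuotientGroup.leftRel_apply] at h
    show rhoX N γ p.2.1.1 = rhoX N γ' p.2.1.1
    have : rhoX N γ' p.2.1.1 = rhoX N γ (rhoX N (γ⁻¹ * γ') p.2.1.1) := by
      rw [← Module.End.mul_apply, ← map_mul]
      congr 1
      group
    rw [this, gensX_fixed N p.1 p.2.1.1 p.2.1.2 _ h])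

lemma qval_mk (A : Subgroup Γ) (s : {s // s ∈ gensX N A}) (γ : Γ) :
    qval N ⟨A, s, QuotientGroup.mk γ⟩ = rhoX N γ s.1 := rfl

/-- The equivariant surjection from the permutation module onto `X`. -/
noncomputable def qmap : (idx2 N →₀ ℤ) →ₗ[ℤ] XQ N :=
  Finsupp.linearCombination ℤ (qval N)

lemma qmap_single (p : idx2 N) (n : ℤ) : qmap N (Finsupp.single p n) = n • qval N p := by
  simp [qmap]

lemma qmap_equivariant (g : Γ) (f : idx2 N →₀ ℤ) :
    qmap N (rho2 N g f) = rhoX N g (qmap N f) := by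
  have : (qmap N) ∘ₗ (rho2 N g) = (rhoX N g) ∘ₗ (qmap N) := by
    apply Finsupp.lhom_ext
    intro p n
    rcases p with ⟨A, s, c⟩
    induction c using Quotient.inductionOn' with
    | h γ =>
      simp only [LinearMap.coe_comp, Function.comp_apply]
      rw [rho2, permRep_single, qmap_single, phi2_apply, qmap_single]
      have hgc : g • (QuotientGroup.mk γ : Γ ⧸ A) = QuotientGroup.mk (g * γ) := rfl
      rw [hgc, qval_mk, qval_mk, map_smul]
      congr 1
      rw [← Module.End.mul_apply, ← map_mul]
  exact congrArg (fun h => h f) this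

lemma qmap_surjective : Function.Surjective (qmap N) := by
  intro x
  have hx : x ∈ fixX N ⊥ := by
    intro γ
    rcases γ with ⟨γ, hγ⟩
    have : γ = 1 := hγ
    subst this
    simp [MonoidHom.comp_apply]
  rw [← span_gensX N ⊥] at hx
  refine Submodule.span_induction ?_ ?_ ?_ ?_ hx
  · rintro s hs
    exact ⟨Finsupp.single ⟨⊥, ⟨s, hs⟩, QuotientGroup.mk 1⟩ 1, by
      rw [qmap_single, qval_mk, map_one, one_smul]; rfl⟩
  · exact ⟨0, map_zero _⟩
  · rintro x y - - ⟨p, rfl⟩ ⟨q, rfl⟩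
    exact ⟨p + q, map_add _ _ _⟩
  · rintro n x - ⟨p, rfl⟩
    exact ⟨n • p, map_smul _ _ _⟩

lemma qmap_fix_surjective (Γ' : Subgroup Γ) (x : XQ N) (hx : x ∈ fixX N Γ') :
    ∃ p : idx2 N →₀ ℤ, (∀ γ ∈ Γ', rho2 N γ p = p) ∧ qmap N p = x := by
  rw [← span_gensX N Γ'] at hx
  refine Submodule.span_induction ?_ ?_ ?_ ?_ hx
  · rintro s hs
    refine ⟨Finsupp.single ⟨Γ', ⟨s, hs⟩, QuotientGroup.mk 1⟩ 1, fun γ hγ => ?_, by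
      rw [qmap_single, qval_mk, map_one, one_smul]; rfl⟩
    rw [rho2, permRep_single, phi2_apply]
    have h1 : γ • (QuotientGroup.mk 1 : Γ ⧸ Γ') = QuotientGroup.mk 1 := by
      have h2 : γ • (QuotientGroup.mk 1 : Γ ⧸ Γ') = QuotientGroup.mk (γ * 1) := rfl
      rw [h2, QuotientGroup.eq]
      simpa using hγ
    rw [h1]
  · exact ⟨0, fun γ _ => map_zero _, map_zero _⟩
  · rintro x y - - ⟨p, hp, rfl⟩ ⟨q, hq, rfl⟩
    exact ⟨p + q, fun γ hγ => by rw [map_add, hp γ hγ, hq γ hγ], map_add _ _ _⟩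
  · rintro n x - ⟨p, hp, rfl⟩
    exact ⟨n • p, fun γ hγ => by rw [map_smul, hp γ hγ], map_smul _ _ _⟩

/-- The difference map cutting out the pullback `E`. -/
noncomputable def dmap : ((idx1 N →₀ ℤ) × (idx2 N →₀ ℤ)) →ₗ[ℤ] XQ N :=
  (LinearMap.range (psi N)).mkQ ∘ₗ LinearMap.fst ℤ _ _ - qmap N ∘ₗ LinearMap.snd ℤ _ _

/-- The pullback `E` as a submodule of `P₁ × P₂`. -/
noncomputable abbrev Esub : Submodule ℤ ((idx1 N →₀ ℤ) × (idx2 N →₀ ℤ)) :=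
  LinearMap.ker (dmap N)

lemma mem_Esub (x : (idx1 N →₀ ℤ) × (idx2 N →₀ ℤ)) :
    x ∈ Esub N ↔ Submodule.Quotient.mk x.1 = qmap N x.2 := by
  rw [LinearMap.mem_ker, dmap, LinearMap.sub_apply, sub_eq_zero]
  rfl

lemma Esub_stable (g : Γ) : ∀ x ∈ Esub N, prodRep (rho1 N) (rho2 N) g x ∈ Esub N := by
  intro x hx
  rw [mem_Esub] at hx ⊢
  have h1 : prodRep (rho1 N) (rho2 N) g x = (rho1 N g x.1, rho2 N g x.2) := rfl
  rw [h1]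
  show Submodule.Quotient.mk (rho1 N g x.1) = qmap N (rho2 N g x.2)
  rw [← rhoX_mk, hx, qmap_equivariant]

/-- The representation on `E`. -/
noncomputable def rhoE : Representation ℤ Γ ↥(Esub N) where
  toFun g := (prodRep (rho1 N) (rho2 N) g).restrict (Esub_stable N g)
  map_one' := by
    apply LinearMap.ext
    intro x
    apply Subtype.ext
    show prodRep (rho1 N) (rho2 N) 1 x.1 = x.1
    rw [map_one]
    rfl
  map_mul' g h := by
    apply LinearMap.ext
    intro x
    apply Subtype.ext
    show prodRep (rho1 N) (rho2 N) (g * h) x.1 = prodRep (rho1 N) (rho2 N) g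
      (prodRep (rho1 N) (rho2 N) h x.1)
    rw [map_mul]
    rfl

lemma rhoE_coe (g : Γ) (e : ↥(Esub N)) :
    (rhoE N g e).val = (rho1 N g e.val.1, rho2 N g e.val.2) := rfl

instance : Module.Finite ℤ ↥(Esub N) := inferInstance

instance : Module.Free ℤ ↥(Esub N) := inferInstance

/-- The inclusion of `N` into `E`. -/
noncomputable def jmap : N.carrier →ₗ[ℤ] ↥(Esub N) :=
  LinearMap.codRestrict (Esub N) ((psi N).prod 0) (fun x => by
    rw [mem_Esub]
    show Submodule.Quotient.mk (psi N x) = qmap N 0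
    rw [map_zero, Submodule.Quotient.mk_eq_zero]
    exact ⟨x, rfl⟩)

lemma jmap_coe (x : N.carrier) : (jmap N x).val = (psi N x, 0) := rfl

/-- The projection from `E` onto `P₂`. -/
noncomputable def pi2E : ↥(Esub N) →ₗ[ℤ] (idx2 N →₀ ℤ) :=
  LinearMap.snd ℤ _ _ ∘ₗ (Esub N).subtype

lemma pi2E_apply (e : ↥(Esub N)) : pi2E N e = e.val.2 := rfl

lemma jmap_equivariant (g : Γ) (x : N.carrier) : jmap N (N.ρ g x) = rhoE N g (jmap N x) := by
  apply Subtype.ext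
  rw [jmap_coe, rhoE_coe, jmap_coe]
  exact Prod.ext (psi_equivariant N g x) (by rw [map_zero])

lemma pi2E_equivariant (g : Γ) (e : ↥(Esub N)) : pi2E N (rhoE N g e) = rho2 N g (pi2E N e) :=
  rfl

lemma jmap_injective : Function.Injective (jmap N) := by
  intro x y h
  have := congrArg (fun e : ↥(Esub N) => e.val.1) h
  simp only [jmap_coe] at this
  exact psi_injective N this

lemma pi2E_surjective : Function.Surjective (pi2E N) := by
  intro p2
  obtain ⟨p1, hp1⟩ := Submodule.mkQ_surjective (LinearMap.range (psi N)) (qmap N p2)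
  exact ⟨⟨(p1, p2), (mem_Esub N _).2 hp1⟩, rfl⟩

lemma jmap_exact : LinearMap.range (jmap N) = LinearMap.ker (pi2E N) := by
  apply le_antisymm
  · rintro _ ⟨x, rfl⟩
    rw [LinearMap.mem_ker, pi2E_apply, jmap_coe]
  · rintro ⟨⟨p1, p2⟩, he⟩ hk
    rw [LinearMap.mem_ker, pi2E_apply] at hk
    simp only at hk
    subst hk
    have h0 : Submodule.Quotient.mk p1 = (0 : XQ N) := by
      rw [(mem_Esub N _).1 he, map_zero]
    rw [Submodule.Quotient.mk_eq_zero] at h0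
    obtain ⟨x, hx⟩ := h0
    exact ⟨x, Subtype.ext (Prod.ext hx rfl)⟩

/-- `E` is coflasque: every `1`-cocycle of a subgroup is a coboundary. -/
lemma rhoE_coflasque (Γ' : Subgroup Γ) : RawH1Trivial ((rhoE N).comp Γ'.subtype) := by
  intro c hc
  set c1 : ↥Γ' → (idx1 N →₀ ℤ) := fun g => (c g).val.1 with hc1
  set c2 : ↥Γ' → (idx2 N →₀ ℤ) := fun g => (c g).val.2 with hc2
  have hcE : ∀ g : ↥Γ', Submodule.Quotient.mk (c1 g) = qmap N (c2 g) :=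
    fun g => (mem_Esub N _).1 (c g).2
  have hc1cocycle : ∀ g h : ↥Γ', c1 (g * h) = rho1 N g.1 (c1 h) + c1 g := by
    intro g h
    have := congrArg (fun e : ↥(Esub N) => e.val.1) (hc g h)
    simpa [c1, rhoE_coe] using this
  have hc2cocycle : ∀ g h : ↥Γ', c2 (g * h) = rho2 N g.1 (c2 h) + c2 g := by
    intro g h
    have := congrArg (fun e : ↥(Esub N) => e.val.2) (hc g h)
    simpa [c2, rhoE_coe] using this
  obtain ⟨p1, hp1⟩ := rawH1Trivial_of_perm ((phi1 N).comp Γ'.subtype)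
    ((rho1 N).comp Γ'.subtype) (fun g f a => permRep_apply _ _ _ _) c1 hc1cocycle
  simp only [MonoidHom.comp_apply, Subgroup.coe_subtype] at hp1
  obtain ⟨p20, hp20⟩ := qmap_surjective N (Submodule.Quotient.mk p1)
  set d : ↥Γ' → (idx2 N →₀ ℤ) := fun g => c2 g - (rho2 N g.1 p20 - p20) with hd
  have hdcocycle : ∀ g h : ↥Γ', d (g * h) = rho2 N g.1 (d h) + d g := by
    intro g h
    simp only [hd, hc2cocycle g h]
    have : (g * h : ↥Γ').1 = g.1 * h.1 := rfl
    rw [this, map_mul]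
    simp only [map_sub, Module.End.mul_apply]
    abel
  have hdq : ∀ g : ↥Γ', qmap N (d g) = 0 := by
    intro g
    simp only [hd, map_sub]
    rw [← hcE g, hp1 g]
    have h1 : (Submodule.Quotient.mk (rho1 N g.1 p1 - p1) : XQ N) =
        rhoX N g.1 (Submodule.Quotient.mk p1) - Submodule.Quotient.mk p1 := by
      rw [Submodule.Quotient.mk_sub, rhoX_mk]
    rw [h1, qmap_equivariant, hp20]
    abel
  obtain ⟨p, hp⟩ := rawH1Trivial_of_perm ((phi2 N).comp Γ'.subtype)
    ((rho2 N).comp Γ'.subtype) (fun g f a => permRep_apply _ _ _ _) d hdcocycle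
  simp only [MonoidHom.comp_apply, Subgroup.coe_subtype] at hp
  have hqp : qmap N p ∈ fixX N Γ' := by
    intro g
    have h0 := hdq g
    rw [hp g, map_sub, qmap_equivariant] at h0
    show rhoX N g.1 (qmap N p) = qmap N p
    exact sub_eq_zero.1 h0
  obtain ⟨p', hp'fix, hp'q⟩ := qmap_fix_surjective N Γ' (qmap N p) hqp
  have he1mem : ((0 : idx1 N →₀ ℤ), p - p') ∈ Esub N := by
    rw [mem_Esub]
    show Submodule.Quotient.mk (0 : idx1 N →₀ ℤ) = qmap N (p - p')
    rw [map_sub, hp'q]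
    simp
  have he0mem : (p1, p20) ∈ Esub N := (mem_Esub N _).2 hp20.symm
  refine ⟨⟨(p1, p20), he0mem⟩ + ⟨(0, p - p'), he1mem⟩, fun g => ?_⟩
  have hp'2 : rho2 N g.1 p' = p' := hp'fix g.1 g.2
  apply Subtype.ext
  have hcoe : ((((rhoE N).comp Γ'.subtype) g (⟨(p1, p20), he0mem⟩ + ⟨(0, p - p'), he1mem⟩) -
      (⟨(p1, p20), he0mem⟩ + ⟨(0, p - p'), he1mem⟩) : ↥(Esub N))).val =
      (rho1 N g.1 (p1 + 0) - (p1 + 0), rho2 N g.1 (p20 + (p - p')) - (p20 + (p - p'))) := rfl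
  rw [hcoe]
  refine Prod.ext ?_ ?_
  · show c1 g = (rho1 N g.1 (p1 + 0) - (p1 + 0), rho2 N g.1 (p20 + (p - p')) -
      (p20 + (p - p'))).1
    dsimp only
    rw [add_zero]
    exact hp1 g
  · show c2 g = (rho1 N g.1 (p1 + 0) - (p1 + 0), rho2 N g.1 (p20 + (p - p')) -
      (p20 + (p - p'))).2
    dsimp only
    have hdg : c2 g - (rho2 N g.1 p20 - p20) = rho2 N g.1 p - p := hp g
    have hc2g : c2 g = rho2 N g.1 p - p + (rho2 N g.1 p20 - p20) := by
      rw [← hdg]; abel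
    rw [hc2g, map_add, map_sub, hp'2]
    abel

instance : Module.Finite ℤ (idx2 N →₀ ℤ) :=
  Module.Finite.equiv (Finsupp.linearEquivFunOnFinite ℤ ℤ (idx2 N)).symm

/-- The dual of `P₂`, as a `Γ`-lattice. -/
@[reducible] noncomputable def PdualL : GammaLattice Γ where
  carrier := Module.Dual ℤ (idx2 N →₀ ℤ)
  ρ := (rho2 N).dual
  free := inferInstance
  finite := inferInstance

/-- The dual of `E`, as a `Γ`-lattice. -/
@[reducible] noncomputable def FL : GammaLattice Γ where
  carrier := Module.Dual ℤ ↥(Esub N)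
  ρ := (rhoE N).dual
  free := inferInstance
  finite := inferInstance

lemma PdualL_isPermutation : (PdualL N).IsPermutation := by
  classical
  refine ⟨idx2 N, (Finsupp.basisSingleOne (R := ℤ)).dualBasis, fun γ i => ⟨phi2 N γ i, ?_⟩⟩
  have hL : ∀ (j : idx2 N) (m : idx2 N →₀ ℤ),
      (Finsupp.basisSingleOne (R := ℤ)).dualBasis j m = m j := by
    intro j m
    rw [Module.Basis.dualBasis_apply]
    rfl
  apply LinearMap.ext
  intro m
  have key : (rho2 N γ⁻¹ m) i = m (phi2 N γ i) := by
    rw [rho2, permRep_apply]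
    congr 1
    rw [map_inv]
    simp
  exact (hL i _).trans (key.trans (hL (phi2 N γ i) m).symm)

/-- A `ℤ`-linear section of `pi2E`. -/
noncomputable def sec2 : (idx2 N →₀ ℤ) →ₗ[ℤ] ↥(Esub N) :=
  Finsupp.linearCombination ℤ (fun i => (pi2E_surjective N (Finsupp.single i 1)).choose)

lemma pi2E_sec2 (f : idx2 N →₀ ℤ) : pi2E N (sec2 N f) = f := by
  have : (pi2E N) ∘ₗ (sec2 N) = LinearMap.id := by
    apply Finsupp.lhom_ext
    intro i n
    simp only [LinearMap.coe_comp, Function.comp_apply, LinearMap.id_apply, sec2,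
      Finsupp.linearCombination_single, map_smul]
    rw [(pi2E_surjective N (Finsupp.single i 1)).choose_spec]
    rw [Finsupp.smul_single, smul_eq_mul, mul_one]
  exact congrArg (fun h => h f) this

lemma sub_sec2_mem_range (e : ↥(Esub N)) :
    e - sec2 N (pi2E N e) ∈ LinearMap.range (jmap N) := by
  rw [jmap_exact, LinearMap.mem_ker, map_sub, pi2E_sec2, sub_self]

/-- A `ℤ`-linear retraction of `jmap`. -/
noncomputable def rmap : ↥(Esub N) →ₗ[ℤ] N.carrier :=
  (LinearEquiv.ofInjective (jmap N) (jmap_injective N)).symm.toLinearMap ∘ₗ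
    LinearMap.codRestrict (LinearMap.range (jmap N)) (LinearMap.id - sec2 N ∘ₗ pi2E N)
      (fun e => by
        simpa using sub_sec2_mem_range N e)

lemma rmap_jmap (x : N.carrier) : rmap N (jmap N x) = x := by
  have h0 : pi2E N (jmap N x) = 0 := by
    have : jmap N x ∈ LinearMap.ker (pi2E N) := by
      rw [← jmap_exact]; exact ⟨x, rfl⟩
    exact this
  have h1 : (LinearMap.codRestrict (LinearMap.range (jmap N)) (LinearMap.id - sec2 N ∘ₗ pi2E N)
      (fun e => by simpa using sub_sec2_mem_range N e)) (jmap N x) =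
      ⟨jmap N x, ⟨x, rfl⟩⟩ := by
    apply Subtype.ext
    show jmap N x - sec2 N (pi2E N (jmap N x)) = jmap N x
    rw [h0, map_zero, sub_zero]
  show (LinearEquiv.ofInjective (jmap N) (jmap_injective N)).symm _ = x
  rw [h1]
  have h2 : (⟨jmap N x, ⟨x, rfl⟩⟩ : ↥(LinearMap.range (jmap N))) =
      LinearEquiv.ofInjective (jmap N) (jmap_injective N) x := by
    apply Subtype.ext
    rfl
  rw [h2, LinearEquiv.symm_apply_apply]

lemma evalEquiv_equivariant' {G : Type} [Group G] {V : Type} [AddCommGroup V] [Module ℤ V]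
    [Module.Free ℤ V] [Module.Finite ℤ V] (ρ : Representation ℤ G V) (g : G) (v : V) :
    Module.evalEquiv ℤ V (ρ g v) = ρ.dual.dual g (Module.evalEquiv ℤ V v) := by
  apply LinearMap.ext
  intro f
  have h1 : Module.evalEquiv ℤ V (ρ g v) f = f (ρ g v) := rfl
  have h2 : (ρ.dual.dual g (Module.evalEquiv ℤ V v)) f = f (ρ g⁻¹⁻¹ v) := rfl
  rw [h1, h2, inv_inv]

lemma FL_isFlasque : (FL N).IsFlasque := by
  intro Γ'
  exact (subsingleton_h1_iff (((rhoE N).dual.dual).comp Γ'.subtype)).2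
    (RawH1Trivial.congr (Module.evalEquiv ℤ ↥(Esub N))
      (fun g v => evalEquiv_equivariant' (rhoE N) g.1 v) (rhoE_coflasque N Γ'))

end Construction


/-- every Γ-lattice `M` admits a flasque resolution of the
second type `0 → P → F → M → 0` with `P` permutation and `F` flasque. -/
theorem exists_flasque_resolution_second_type
    {Γ : Type} [Group Γ] [Finite Γ] (M : GammaLattice Γ) :
    ∃ (P F : GammaLattice Γ)
      (ι : P.carrier →ₗ[ℤ] F.carrier) (π : F.carrier →ₗ[ℤ] M.carrier),
      P.IsPermutation ∧ F.IsFlasque ∧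
        IsShortExactSeq P.ρ F.ρ M.ρ ι π := by
  classical
  set N := M.dual with hNdef
  refine ⟨PdualL N, FL N, (pi2E N).dualMap,
    (Module.evalEquiv ℤ M.carrier).symm.toLinearMap ∘ₗ (jmap N).dualMap,
    PdualL_isPermutation N, FL_isFlasque N, ?_, ?_, ?_, ?_, ?_⟩
  · -- equivariance of ι
    intro γ Φ
    apply LinearMap.ext
    intro e
    show (Φ : Module.Dual ℤ (idx2 N →₀ ℤ)) (rho2 N γ⁻¹ (pi2E N e)) =
      (Φ : Module.Dual ℤ (idx2 N →₀ ℤ)) (pi2E N (rhoE N γ⁻¹ e))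
    rw [pi2E_equivariant]
  · -- equivariance of π
    intro γ Φ
    apply (Module.evalEquiv ℤ M.carrier).injective
    have hjd : (jmap N).dualMap ((rhoE N).dual γ Φ) =
        ((M.ρ.dual).dual γ) ((jmap N).dualMap Φ) := by
      apply LinearMap.ext
      intro x
      show (Φ : Module.Dual ℤ ↥(Esub N)) (rhoE N γ⁻¹ (jmap N x)) =
        (Φ : Module.Dual ℤ ↥(Esub N)) (jmap N (N.ρ γ⁻¹ x))
      rw [jmap_equivariant]
    show Module.evalEquiv ℤ M.carrier
        ((Module.evalEquiv ℤ M.carrier).symm ((jmap N).dualMap ((rhoE N).dual γ Φ))) =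
      Module.evalEquiv ℤ M.carrier (M.ρ γ ((Module.evalEquiv ℤ M.carrier).symm
        ((jmap N).dualMap Φ)))
    erw [LinearEquiv.apply_symm_apply, evalEquiv_equivariant' M.ρ γ,
      LinearEquiv.apply_symm_apply, hjd]
  · -- injectivity of ι
    intro Φ Ψ h
    apply LinearMap.ext
    intro p2
    obtain ⟨e, rfl⟩ := pi2E_surjective N p2
    exact congrArg (fun f : Module.Dual ℤ ↥(Esub N) => f e) h
  · -- surjectivity of π
    intro m
    refine ⟨(Module.evalEquiv ℤ M.carrier m) ∘ₗ rmap N, ?_⟩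
    have hjd : (jmap N).dualMap ((Module.evalEquiv ℤ M.carrier m) ∘ₗ rmap N) =
        Module.evalEquiv ℤ M.carrier m := by
      apply LinearMap.ext
      intro x
      show (Module.evalEquiv ℤ M.carrier m) (rmap N (jmap N x)) =
        Module.evalEquiv ℤ M.carrier m x
      rw [rmap_jmap]
    show (Module.evalEquiv ℤ M.carrier).symm ((jmap N).dualMap _) = m
    rw [hjd, LinearEquiv.symm_apply_apply]
  · -- exactness
    ext Φ
    constructor
    · rintro ⟨φ, rfl⟩
      show (Module.evalEquiv ℤ M.carrier).symm ((jmap N).dualMap ((pi2E N).dualMap φ)) = 0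
      have h0 : (jmap N).dualMap ((pi2E N).dualMap φ) = 0 := by
        apply LinearMap.ext
        intro x
        show (φ : Module.Dual ℤ (idx2 N →₀ ℤ)) (pi2E N (jmap N x)) = 0
        have h1 : pi2E N (jmap N x) = 0 := rfl
        rw [h1, map_zero]
      erw [h0, map_zero]
    · intro hker
      have h0 : (jmap N).dualMap Φ = 0 := by
        have : (Module.evalEquiv ℤ M.carrier).symm ((jmap N).dualMap Φ) = 0 := hker
        exact (LinearEquiv.map_eq_zero_iff _).1 this
      have hj : ∀ x : N.carrier, (Φ : Module.Dual ℤ ↥(Esub N)) (jmap N x) = 0 := by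
        intro x
        exact congrArg (fun f : Module.Dual ℤ N.carrier => f x) h0
      refine ⟨Φ ∘ₗ sec2 N, ?_⟩
      apply LinearMap.ext
      intro e
      show (Φ : Module.Dual ℤ ↥(Esub N)) (sec2 N (pi2E N e)) =
        (Φ : Module.Dual ℤ ↥(Esub N)) e
      obtain ⟨x, hx⟩ := sub_sec2_mem_range N e
      have := hj x
      rw [hx, map_sub] at this
      have h2 := sub_eq_zero.1 this
      exact h2.symm ▸ rfl
end

section
/- Let Γ be a finite group and let 0 → C → H → Q → 0 be a short exact sequence of Γ-lattices in which C is coflasque and Q is invertible. Then the sequence splits, so H ≅ C ⊕ Q as ℤ[Γ]-modules, and H is coflasque. -/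
variable {Γ : Type} [Group Γ]

open groupCohomology in
lemma mem_oneCoboundaries_of_subsingleton_h1 {k G : Type} [CommRing k] [Group G]
    (A : Rep k G) (hH1 : Subsingleton (groupCohomology.H1 A))
    (f : cocycles₁ A) : ⇑f ∈ coboundaries₁ A := by
  exact (H1π_eq_zero_iff f).1 (Subsingleton.elim _ _)

open groupCohomology in
lemma subsingleton_h1_of_forall_mem_oneCoboundaries {k G : Type} [CommRing k] [Group G]
    (A : Rep k G) (h : ∀ f : cocycles₁ A, ⇑f ∈ coboundaries₁ A) :
    Subsingleton (groupCohomology.H1 A) := by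
  have h0 : ∀ a : groupCohomology.H1 A, a = 0 := fun a =>
    H1_induction_on a fun f => (H1π_eq_zero_iff f).2 (h f)
  exact ⟨fun a b => by rw [h0 a, h0 b]⟩

open groupCohomology in
lemma coboundary_of_subsingleton_h1 {G : Type} [Group G]
    {M : Type} [AddCommGroup M] [Module ℤ M] (ρ : Representation ℤ G M)
    (hH1 : Subsingleton (groupCohomology.H1 (Rep.of ρ)))
    (c : G → M) (hc : ∀ g h, c (g * h) = ρ g (c h) + c g) :
    ∃ x : M, ∀ g, c g = ρ g x - x := by
  have hmem : c ∈ cocycles₁ (Rep.of ρ) := (mem_cocycles₁_iff (A := Rep.of ρ) c).2 hc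
  have h1 := mem_oneCoboundaries_of_subsingleton_h1 (Rep.of ρ) hH1 ⟨c, hmem⟩
  obtain ⟨x, hx⟩ := h1
  exact ⟨x, fun g => (congrFun hx g).symm⟩

open groupCohomology in
lemma subsingleton_h1_of_coboundary {G : Type} [Group G]
    {M : Type} [AddCommGroup M] [Module ℤ M] (ρ : Representation ℤ G M)
    (h : ∀ c : G → M, (∀ g h, c (g * h) = ρ g (c h) + c g) → ∃ x : M, ∀ g, c g = ρ g x - x) :
    Subsingleton (groupCohomology.H1 (Rep.of ρ)) := by
  refine subsingleton_h1_of_forall_mem_oneCoboundaries _ fun f => ?_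
  obtain ⟨x, hx⟩ := h f.1 ((mem_cocycles₁_iff (A := Rep.of ρ) _).1 f.2)
  show ∃ y, (d₀₁ (Rep.of ρ)).hom y = ⇑f
  exact ⟨x, funext fun g => (hx g).symm⟩

lemma perm_cocycle_is_coboundary_s16 {G : Type} [Group G] [Finite G]
    {M : Type} [AddCommGroup M] [Module ℤ M] (ρ : Representation ℤ G M)
    {ι : Type} [Finite ι] (b : Module.Basis ι ℤ M)
    (hb : ∀ (g : G) (i : ι), ∃ j, ρ g (b i) = b j)
    (c : G → M) (hc : ∀ g h, c (g * h) = ρ g (c h) + c g) :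
    ∃ x : M, ∀ g, c g = ρ g x - x := by
  classical
  choose σ hσ using hb
  have σ_one : ∀ i, σ 1 i = i := fun i => (b.injective (by rw [← hσ]; simp)).symm
  have σ_mul : ∀ g h i, σ (g * h) i = σ g (σ h i) := fun g h i =>
    b.injective (by rw [← hσ, map_mul, Module.End.mul_apply, ← hσ, ← hσ])
  have σ_inv : ∀ g i, σ g⁻¹ (σ g i) = i := fun g i => by
    rw [← σ_mul, inv_mul_cancel, σ_one]
  have σ_inv' : ∀ g i, σ g (σ g⁻¹ i) = i := fun g i => by
    have := σ_inv g⁻¹ i; rwa [inv_inv] at this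
  have σ_inj : ∀ g, Function.Injective (σ g) := fun g i j hij => by
    have := congrArg (σ g⁻¹) hij; rwa [σ_inv, σ_inv] at this
  have coord : ∀ (g : G) (m : M) (i : ι), b.repr (ρ g m) (σ g i) = b.repr m i := by
    intro g m i
    have hmaps : (Finsupp.lapply (σ g i) ∘ₗ (b.repr : M →ₗ[ℤ] ι →₀ ℤ) ∘ₗ (ρ g))
        = (Finsupp.lapply i ∘ₗ (b.repr : M →ₗ[ℤ] ι →₀ ℤ)) := by
      apply b.ext
      intro j
      simp only [LinearMap.coe_comp, Function.comp_apply, LinearEquiv.coe_coe,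
        Finsupp.lapply_apply, hσ, Module.Basis.repr_self]
      rw [Finsupp.single_apply, Finsupp.single_apply]
      by_cases h : j = i
      · subst h; simp
      · rw [if_neg (fun hh => h (σ_inj g hh)), if_neg h]
    exact LinearMap.congr_fun hmaps m
  have coord' : ∀ (g : G) (m : M) (j : ι), b.repr (ρ g m) j = b.repr m (σ g⁻¹ j) := by
    intro g m j
    have := coord g m (σ g⁻¹ j); rwa [σ_inv'] at this
  set C : G → ι → ℤ := fun g i => b.repr (c g) i with hCdef
  have c_one : c 1 = 0 := by
    have h11 := hc 1 1
    rw [one_mul, map_one, Module.End.one_apply] at h11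
    exact (left_eq_add.1 h11)
  have star : ∀ (g h : G) (m : ι), C (g * h) (σ g m) = C h m + C g (σ g m) := by
    intro g h m
    show b.repr (c (g * h)) (σ g m) = _
    rw [hc g h, map_add, Finsupp.add_apply, coord]
  let st : Setoid ι := ⟨fun i j => ∃ g, σ g i = j,
    ⟨fun i => ⟨1, σ_one i⟩,
     fun ⟨g, hg⟩ => ⟨g⁻¹, by rw [← hg, σ_inv]⟩,
     fun ⟨g, hg⟩ ⟨h, hh⟩ => ⟨h * g, by rw [σ_mul, hg, hh]⟩⟩⟩
  let rep : ι → ι := fun i => (Quotient.mk st i).out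
  have hrep : ∀ i, ∃ g, σ g (rep i) = i := fun i => Quotient.mk_out (s := st) i
  have hrep_eq : ∀ g i, rep (σ g i) = rep i := fun g i =>
    congrArg Quotient.out (Quotient.sound ⟨g⁻¹, σ_inv g i⟩)
  choose τ hτ using hrep
  have stab_zero : ∀ (J : ι) (s : G), σ s J = J → C s J = 0 := by
    intro J s hs
    have hadd : ∀ n : ℕ, C (s ^ n) J = n • (C s J) := by
      intro n; induction n with
      | zero => rw [pow_zero, zero_smul]; show b.repr (c 1) J = 0; rw [c_one]; simp
      | succ n ih =>
        have hst := star s (s ^ n) J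
        rw [hs] at hst
        rw [pow_succ', hst, ih, succ_nsmul]
    have h1 : C (s ^ orderOf s) J = 0 := by
      rw [pow_orderOf_eq_one]; show b.repr (c 1) J = 0; rw [c_one]; simp
    rw [hadd, nsmul_eq_mul] at h1
    have hne : (orderOf s : ℤ) ≠ 0 := Int.natCast_ne_zero.2 (orderOf_pos s).ne'
    exact (mul_eq_zero.1 h1).resolve_left hne
  have Cwd : ∀ (j : ι) (g : G), σ g (rep j) = j → C g j = C (τ j) j := by
    intro j g hg
    have h2 := σ_inv (τ j) (rep j)
    rw [hτ j] at h2
    have hs : σ ((τ j)⁻¹ * g) (rep j) = rep j := by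
      rw [σ_mul, hg, h2]
    have hst := star (τ j) ((τ j)⁻¹ * g) (rep j)
    rw [hτ j, mul_inv_cancel_left, stab_zero (rep j) _ hs, zero_add] at hst
    exact hst
  let D : ι → ℤ := fun i => C (τ i) i
  let x : M := b.repr.symm (Finsupp.equivFunOnFinite.symm (fun i => -D i))
  have hxco : ∀ i, b.repr x i = -D i := fun i => by
    show (b.repr (b.repr.symm _)) i = _
    rw [LinearEquiv.apply_symm_apply]
    rfl
  refine ⟨x, fun g => ?_⟩
  apply b.repr.injective
  ext j
  rw [map_sub, Finsupp.sub_apply, coord' g x j, hxco, hxco]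
  set m := σ g⁻¹ j with hm
  have hrepm : rep m = rep j := by rw [hm, hrep_eq]
  have hσm : σ g m = j := σ_inv' g j
  have hst := star g (τ m) m
  rw [hσm] at hst
  have hwd : C (g * τ m) j = C (τ j) j := by
    apply Cwd
    rw [σ_mul, ← hrepm, hτ m, hσm]
  rw [hwd] at hst
  show C g j = -D m - -D j
  simp only [D]
  linarith [hst]
lemma exists_invariant_preimage {Γ : Type} [Group Γ]
    {Cc Hc Qc : Type} [AddCommGroup Cc] [Module ℤ Cc] [AddCommGroup Hc] [Module ℤ Hc]
    [AddCommGroup Qc] [Module ℤ Qc]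
    (ρC : Representation ℤ Γ Cc) (ρH : Representation ℤ Γ Hc) (ρQ : Representation ℤ Γ Qc)
    (ι : Cc →ₗ[ℤ] Hc) (π : Hc →ₗ[ℤ] Qc)
    (hse : IsShortExactSeq ρC ρH ρQ ι π)
    (S : Subgroup Γ)
    (hH1 : Subsingleton (groupCohomology.H1 (Rep.of (ρC.comp S.subtype))))
    (q : Qc) (hq : ∀ s ∈ S, ρQ s q = q) :
    ∃ h : Hc, π h = q ∧ ∀ s ∈ S, ρH s h = h := by
  obtain ⟨hι, hπ, hinj, hsurj, hrange⟩ := hse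
  obtain ⟨h₀, hh₀⟩ := hsurj q
  have hker : ∀ s : S, ρH s h₀ - h₀ ∈ LinearMap.range ι := by
    intro s
    rw [hrange, LinearMap.mem_ker, map_sub, hπ, hh₀, hq s s.2, sub_self]
  choose cc hcc using fun s : S => hker s
  have hcoc : ∀ s t : S, cc (s * t) = (ρC.comp S.subtype) s (cc t) + cc s := by
    intro s t
    apply hinj
    rw [map_add, hcc]
    have e1 : ι (((ρC.comp S.subtype)) s (cc t)) = ρH (s : Γ) (ι (cc t)) := hι (s : Γ) (cc t)
    rw [e1, hcc, hcc, Subgroup.coe_mul, map_mul, Module.End.mul_apply, map_sub]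
    abel
  obtain ⟨x, hx⟩ := coboundary_of_subsingleton_h1 (ρC.comp S.subtype) hH1 cc hcoc
  refine ⟨h₀ - ι x, ?_, ?_⟩
  · rw [map_sub, hh₀]
    have hmem : ι x ∈ LinearMap.ker π := hrange ▸ LinearMap.mem_range_self ι x
    rw [LinearMap.mem_ker.1 hmem, sub_zero]
  · intro s hs
    have hxs := hx ⟨s, hs⟩
    have heq := hcc ⟨s, hs⟩
    rw [hxs] at heq
    have heq2 : ρH s (ι x) - ι x = ρH s h₀ - h₀ := by
      rw [← heq, map_sub]
      congr 1
      exact (hι s x).symm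
    rw [map_sub]
    rw [sub_eq_sub_iff_sub_eq_sub] at heq2
    calc ρH s h₀ - ρH s (ι x) = -((ρH s) (ι x) - ρH s h₀) := (neg_sub _ _).symm
      _ = -(ι x - h₀) := by rw [heq2]
      _ = h₀ - ι x := neg_sub _ _
lemma exists_equivariant_lift {Γ : Type} [Group Γ]
    {Nc Hc Qc : Type} [AddCommGroup Nc] [Module ℤ Nc] [AddCommGroup Hc] [Module ℤ Hc]
    [AddCommGroup Qc] [Module ℤ Qc]
    (ρN : Representation ℤ Γ Nc) (ρH : Representation ℤ Γ Hc) (ρQ : Representation ℤ Γ Qc)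
    {ιt : Type} (b : Module.Basis ιt ℤ Nc) (hb : ∀ (g : Γ) (i : ιt), ∃ j, ρN g (b i) = b j)
    (p : Nc →ₗ[ℤ] Qc) (hp : IsEquivariantMap ρN ρQ p)
    (π : Hc →ₗ[ℤ] Qc) (hπ : IsEquivariantMap ρH ρQ π)
    (hlift : ∀ (S : Subgroup Γ) (q : Qc), (∀ s ∈ S, ρQ s q = q) →
      ∃ h, π h = q ∧ ∀ s ∈ S, ρH s h = h) :
    ∃ L : Nc →ₗ[ℤ] Hc, IsEquivariantMap ρN ρH L ∧ π ∘ₗ L = p := by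
  classical
  choose σ hσ using hb
  have σ_one : ∀ i, σ 1 i = i := fun i => (b.injective (by rw [← hσ]; simp)).symm
  have σ_mul : ∀ g h i, σ (g * h) i = σ g (σ h i) := fun g h i =>
    b.injective (by rw [← hσ, map_mul, Module.End.mul_apply, ← hσ, ← hσ])
  have σ_inv : ∀ g i, σ g⁻¹ (σ g i) = i := fun g i => by
    rw [← σ_mul, inv_mul_cancel, σ_one]
  let st : Setoid ιt := ⟨fun i j => ∃ g, σ g i = j,
    ⟨fun i => ⟨1, σ_one i⟩,
     fun ⟨g, hg⟩ => ⟨g⁻¹, by rw [← hg, σ_inv]⟩,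
     fun ⟨g, hg⟩ ⟨h, hh⟩ => ⟨h * g, by rw [σ_mul, hg, hh]⟩⟩⟩
  let rep : ιt → ιt := fun i => (Quotient.mk st i).out
  have hrep : ∀ i, ∃ g, σ g (rep i) = i := fun i => Quotient.mk_out (s := st) i
  have hrep_eq : ∀ g i, rep (σ g i) = rep i := fun g i =>
    congrArg Quotient.out (Quotient.sound ⟨g⁻¹, σ_inv g i⟩)
  choose τ hτ using hrep
  -- the stabilizer subgroup of `(Quotient.out o)`
  let Ssub : Quotient st → Subgroup Γ := fun o =>
    { carrier := {γ | σ γ o.out = o.out}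
      one_mem' := σ_one _
      mul_mem' := fun {a b'} ha hb' => by
        show σ (a * b') _ = _
        rw [σ_mul]
        show σ a (σ b' _) = _
        rw [hb', ha]
      inv_mem' := fun {a} ha => by
        have ha' : σ a o.out = o.out := ha
        have h3 := σ_inv a o.out
        rw [ha'] at h3
        exact h3 }
  have hfixq : ∀ (o : Quotient st), ∀ s ∈ Ssub o, ρQ s (p (b o.out)) = p (b o.out) := by
    intro o s hs
    rw [← hp, hσ, hs]
  choose h hπh hfixh using fun o : Quotient st => hlift (Ssub o) (p (b o.out)) (hfixq o)
  -- note : rep i = (Quotient.mk st i).out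
  have hwd : ∀ (i : ιt) (g : Γ), σ g (rep i) = i →
      ρH g (h (Quotient.mk st i)) = ρH (τ i) (h (Quotient.mk st i)) := by
    intro i g hg
    have h2 := σ_inv (τ i) (rep i)
    rw [hτ i] at h2
    have hs : ((τ i)⁻¹ * g) ∈ Ssub (Quotient.mk st i) := by
      show σ ((τ i)⁻¹ * g) (rep i) = rep i
      rw [σ_mul, hg, h2]
    have hfx := hfixh (Quotient.mk st i) _ hs
    calc ρH g (h (Quotient.mk st i))
        = ρH (τ i * ((τ i)⁻¹ * g)) (h (Quotient.mk st i)) := by rw [mul_inv_cancel_left]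
      _ = ρH (τ i) (ρH ((τ i)⁻¹ * g) (h (Quotient.mk st i))) := by
          rw [map_mul, Module.End.mul_apply]
      _ = ρH (τ i) (h (Quotient.mk st i)) := by rw [hfx]
  let L : Nc →ₗ[ℤ] Hc := b.constr ℕ (fun i => ρH (τ i) (h (Quotient.mk st i)))
  have hLb : ∀ i, L (b i) = ρH (τ i) (h (Quotient.mk st i)) := fun i =>
    b.constr_basis ℕ _ i
  have hequiv : ∀ γ : Γ, L ∘ₗ (ρN γ : Nc →ₗ[ℤ] Nc) = (ρH γ : Hc →ₗ[ℤ] Hc) ∘ₗ L := by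
    intro γ
    apply b.ext
    intro i
    simp only [LinearMap.coe_comp, Function.comp_apply]
    rw [hσ, hLb, hLb]
    have hq : (Quotient.mk st (σ γ i)) = Quotient.mk st i :=
      Quotient.sound ⟨γ⁻¹, σ_inv γ i⟩
    have hwd2 := hwd (σ γ i) (γ * τ i) (by rw [hrep_eq, σ_mul, hτ])
    rw [hq] at hwd2
    rw [hq, ← hwd2, map_mul, Module.End.mul_apply]
  refine ⟨L, fun γ m => LinearMap.congr_fun (hequiv γ) m, ?_⟩
  apply b.ext
  intro i
  simp only [LinearMap.coe_comp, Function.comp_apply]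
  rw [hLb, hπ, hπh]
  rw [← hp, hσ, hτ]
/-- a short exact sequence `0 → C → H → Q → 0` of Γ-lattices
with `C` coflasque and `Q` invertible splits, so `H ≅ C ⊕ Q` as
`ℤ[Γ]`-modules, and `H` is coflasque. -/
theorem coflasque_extension_by_invertible_splits
    {Γ : Type} [Group Γ] [Finite Γ]
    (C H Q : GammaLattice Γ) (hC : C.IsCoflasque) (hQ : Q.IsInvertible)
    (ι : C.carrier →ₗ[ℤ] H.carrier) (π : H.carrier →ₗ[ℤ] Q.carrier)
    (hse : IsShortExactSeq C.ρ H.ρ Q.ρ ι π) :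
    (∃ s : Q.carrier →ₗ[ℤ] H.carrier,
        IsEquivariantMap Q.ρ H.ρ s ∧ π.comp s = LinearMap.id) ∧
    (∃ e : H.carrier ≃ₗ[ℤ] (C.carrier × Q.carrier),
        IsEquivariantMap H.ρ (prodRep C.ρ Q.ρ) e.toLinearMap) ∧
    H.IsCoflasque := by
  classical
  obtain ⟨N, ⟨ιt, b, hbperm⟩, i, p, hi, hp, hpi⟩ := hQ
  obtain ⟨hιe, hπe, hinj, hsurj, hrange⟩ := hse
  have hιe' : ∀ (γ : Γ) m, ι (C.ρ γ m) = H.ρ γ (ι m) := hιe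
  have hπe' : ∀ (γ : Γ) m, π (H.ρ γ m) = Q.ρ γ (π m) := hπe
  have hi' : ∀ (γ : Γ) m, i (Q.ρ γ m) = N.ρ γ (i m) := hi
  have hp' : ∀ (γ : Γ) m, p (N.ρ γ m) = Q.ρ γ (p m) := hp
  have hse' : IsShortExactSeq C.ρ H.ρ Q.ρ ι π := ⟨hιe, hπe, hinj, hsurj, hrange⟩
  have hlift : ∀ (S : Subgroup Γ) (q : Q.carrier), (∀ s ∈ S, Q.ρ s q = q) →
      ∃ h, π h = q ∧ ∀ s ∈ S, H.ρ s h = h :=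
    fun S q hq => exists_invariant_preimage C.ρ H.ρ Q.ρ ι π hse' S (hC S) q hq
  obtain ⟨L, hLeq, hLπ⟩ := exists_equivariant_lift N.ρ H.ρ Q.ρ b hbperm p hp π hπe hlift
  set s : Q.carrier →ₗ[ℤ] H.carrier := L ∘ₗ i with hsdef
  have hseq : IsEquivariantMap Q.ρ H.ρ s := by
    intro γ m
    show L (i (Q.ρ γ m)) = H.ρ γ (L (i m))
    rw [hi', hLeq]
  have hseq' : ∀ (γ : Γ) m, s (Q.ρ γ m) = H.ρ γ (s m) := hseq
  have hsec : π.comp s = LinearMap.id := by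
    apply LinearMap.ext
    intro q
    show π (L (i q)) = q
    have h1 := LinearMap.congr_fun hLπ (i q)
    simp only [LinearMap.comp_apply] at h1
    rw [h1]
    exact LinearMap.congr_fun hpi q
  have hπs : ∀ q, π (s q) = q := fun q => LinearMap.congr_fun hsec q
  have hπι : ∀ cz, π (ι cz) = 0 := by
    intro cz
    have h3 : ι cz ∈ LinearMap.ker π := hrange ▸ LinearMap.mem_range_self ι cz
    exact LinearMap.mem_ker.1 h3
  -- `ι.coprod s : C × Q → H` is a bijection
  have hbij : Function.Bijective (ι.coprod s) := by
    constructor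
    · rintro ⟨c1, q1⟩ ⟨c2, q2⟩ hz
      have hz' : ι c1 + s q1 = ι c2 + s q2 := hz
      have hq : q1 = q2 := by
        have h4 := congrArg π hz'
        rw [map_add, map_add, hπι, hπι, hπs, hπs, zero_add, zero_add] at h4
        exact h4
      have hc : c1 = c2 := by
        apply hinj
        have h5 := hz'
        rw [hq] at h5
        exact add_right_cancel h5
      rw [hc, hq]
    · intro v
      have h3 : v - s (π v) ∈ LinearMap.range ι := by
        rw [hrange, LinearMap.mem_ker, map_sub, hπs, sub_self]
      obtain ⟨c0, hc0⟩ := h3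
      refine ⟨(c0, π v), ?_⟩
      show ι c0 + s (π v) = v
      rw [hc0]
      exact sub_add_cancel _ _
  set e' := LinearEquiv.ofBijective (ι.coprod s) hbij with he'
  have he'app : ∀ z : C.carrier × Q.carrier, e' z = ι z.1 + s z.2 := fun z => rfl
  have hsym : ∀ v, ι (e'.symm v).1 + s (e'.symm v).2 = v := by
    intro v
    have h4 := e'.apply_symm_apply v
    rw [he'app] at h4
    exact h4
  have heqv : ∀ (γ : Γ) v, e'.symm (H.ρ γ v) = prodRep C.ρ Q.ρ γ (e'.symm v) := by
    intro γ v
    apply e'.injective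
    rw [LinearEquiv.apply_symm_apply, he'app]
    have h5 : prodRep C.ρ Q.ρ γ (e'.symm v) =
        (C.ρ γ (e'.symm v).1, Q.ρ γ (e'.symm v).2) := rfl
    rw [h5]
    show H.ρ γ v = ι (C.ρ γ (e'.symm v).1) + s (Q.ρ γ (e'.symm v).2)
    rw [hιe', hseq', ← map_add, hsym]
  -- the retraction onto C and the decomposition
  set rr : H.carrier → C.carrier := fun v => (e'.symm v).1 with hrrdef
  have hsnd : ∀ v, (e'.symm v).2 = π v := by
    intro v
    have h4 := congrArg π (hsym v)
    rw [map_add, hπι, hπs, zero_add] at h4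
    exact h4
  have hdecomp : ∀ v, v = ι (rr v) + s (π v) := by
    intro v
    rw [hrrdef, ← hsnd v]
    exact (hsym v).symm
  have hrre : ∀ (γ : Γ) v, rr (H.ρ γ v) = C.ρ γ (rr v) := by
    intro γ v
    show (e'.symm (H.ρ γ v)).1 = _
    rw [heqv]
    rfl
  have hrradd : ∀ a b', rr (a + b') = rr a + rr b' := by
    intro a b'
    show (e'.symm (a + b')).1 = _
    rw [map_add]
    rfl
  -- coflasqueness of H
  have hcofH : H.IsCoflasque := by
    intro Γ'
    apply subsingleton_h1_of_coboundary
    intro c hcoc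
    have hcoc' : ∀ g h : Γ', c (g * h) = H.ρ (g : Γ) (c h) + c g := hcoc
    -- the C-component cocycle
    have hcocC : ∀ g h : Γ', rr (c (g * h)) =
        (C.ρ.comp Γ'.subtype) g (rr (c h)) + rr (c g) := by
      intro g h
      show rr (c (g * h)) = C.ρ (g : Γ) (rr (c h)) + rr (c g)
      rw [hcoc' g h, hrradd, hrre]
    obtain ⟨xC, hxC⟩ := coboundary_of_subsingleton_h1 (C.ρ.comp Γ'.subtype) (hC Γ')
      (fun g => rr (c g)) hcocC
    -- the Q-component cocycle
    have hcocQ : ∀ g h : Γ', π (c (g * h)) = Q.ρ (g : Γ) (π (c h)) + π (c g) := by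
      intro g h
      rw [hcoc' g h, map_add, hπe']
    haveI hNfin : Module.Finite ℤ N.carrier := N.finite
    haveI hfinι : Finite ιt := Module.Finite.finite_basis b
    have hcocN : ∀ g h : Γ', i (π (c (g * h))) =
        (N.ρ.comp Γ'.subtype) g (i (π (c h))) + i (π (c g)) := by
      intro g h
      show i (π (c (g * h))) = N.ρ (g : Γ) (i (π (c h))) + i (π (c g))
      rw [hcocQ g h, map_add, hi']
    obtain ⟨y, hy⟩ := perm_cocycle_is_coboundary_s16 (N.ρ.comp Γ'.subtype) b
      (fun g ii => hbperm (g : Γ) ii) (fun g : Γ' => i (π (c g))) hcocN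
    have hxQ : ∀ g : Γ', π (c g) = Q.ρ (g : Γ) (p y) - p y := by
      intro g
      have h5 := congrArg p (hy g)
      have h6 : (N.ρ.comp Γ'.subtype) g y = N.ρ (g : Γ) y := rfl
      rw [h6, map_sub, hp'] at h5
      have h7 : p (i (π (c g))) = π (c g) := LinearMap.congr_fun hpi (π (c g))
      rw [h7] at h5
      exact h5
    refine ⟨ι xC + s (p y), fun g => ?_⟩
    show c g = H.ρ (g : Γ) (ι xC + s (p y)) - (ι xC + s (p y))
    have h8 : (C.ρ.comp Γ'.subtype) g xC = C.ρ (g : Γ) xC := rfl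
    have h9 : ι (rr (c g)) = ι (C.ρ (g : Γ) xC) - ι xC := by
      rw [hxC g, h8, map_sub]
    have h10 : s (π (c g)) = s (Q.ρ (g : Γ) (p y)) - s (p y) := by
      rw [hxQ g, map_sub]
    calc c g = ι (rr (c g)) + s (π (c g)) := hdecomp (c g)
      _ = (ι (C.ρ (g : Γ) xC) - ι xC) + (s (Q.ρ (g : Γ) (p y)) - s (p y)) := by
          rw [h9, h10]
      _ = (H.ρ (g : Γ) (ι xC) - ι xC) + (H.ρ (g : Γ) (s (p y)) - s (p y)) := by
          rw [hιe', hseq']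
      _ = H.ρ (g : Γ) (ι xC + s (p y)) - (ι xC + s (p y)) := by
          rw [map_add]; abel
  refine ⟨⟨s, hseq, hsec⟩,
    ⟨⟨⟨⟨fun v => e'.symm v, fun a b' => map_add e'.symm a b'⟩, ?_⟩,
      fun z => e' z, fun v => e'.apply_symm_apply v, fun z => e'.symm_apply_apply z⟩,
      fun γ v => heqv γ v⟩, hcofH⟩
  intro cz v
  have hModEq : (AddCommGroup.toIntModule (C.carrier × Q.carrier)) =
      (Prod.instModule : Module ℤ (C.carrier × Q.carrier)) :=
    (AddCommGroup.uniqueIntModule.uniq _).trans (AddCommGroup.uniqueIntModule.uniq _).symm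
  rw [hModEq]
  exact e'.symm.map_smul cz v
end
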